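/- The Laurent series θ is irrational: there exist no polynomials P, Q ∈ ℚ[X] with Q ≠ 0 such that θ · Q(X) = P(X) in ℚ((X)). -/

import Mathlib

/-- The words `W n` over the alphabet `{1,2}`:
`W 0 = ε`, `W 1 = 1`, `W (n+2) = W (n+1) 2 W n 2 W (n+1)`. -/
def W : ℕ → List ℕ
  | 0 => []
  | 1 => [1]
  | (n+2) => W (n+1) ++ [2] ++ W n ++ [2] ++ W (n+1)

/-- `w n` is the `n`-th letter (for `n ≥ 1`) of the common infinite extension of
the words `W n` (each `W n` being a prefix of `W (n+1)`). -/
def w (n : ℕ) : ℕ := (W n).getD (n-1) 0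

/-- `θ = ∑_{n ≥ 1} w(n) Xⁿ`, as a formal Laurent series over `ℚ`. -/
noncomputable def theta : LaurentSeries ℚ :=
  ((PowerSeries.mk fun n => if n = 0 then 0 else (w n : ℚ)) : PowerSeries ℚ)

def sb (a : ℕ) : List ℕ := if a = 1 then [1,2,2] else [1,2]

def V (n : ℕ) : List ℕ := W n ++ [2]

def x (n : ℕ) : ℕ := w (n+1)

def c : ℕ → ℕ
  | 0 => 0
  | k+1 => c k + (if x k = 1 then 3 else 2)

lemma W_rec (n : ℕ) : W (n+2) = W (n+1) ++ [2] ++ W n ++ [2] ++ W (n+1) := rfl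

lemma getD_app_left (L1 L2 : List ℕ) (i : ℕ) (d : ℕ) (h : i < L1.length) :
    (L1 ++ L2).getD i d = L1.getD i d := by
  induction L1 generalizing i with
  | nil => simp at h
  | cons a t ih =>
    cases i with
    | zero => simp
    | succ j => simpa using ih j (by simpa using h)

lemma getD_app_right (L1 L2 : List ℕ) (i : ℕ) (d : ℕ) :
    (L1 ++ L2).getD (L1.length + i) d = L2.getD i d := by
  induction L1 with
  | nil => simp
  | cons a t ih =>
    have : (a :: t).length + i = (t.length + i) + 1 := by simp; omega
    rw [this]
    simpa using ih

lemma W_prefix (n : ℕ) : W n <+: W (n+1) := by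
  cases n with
  | zero => simp [W]
  | succ k => exact ⟨[2] ++ W k ++ [2] ++ W (k+1), by simp [W_rec]⟩

lemma W_prefix_le {m n : ℕ} (h : m ≤ n) : W m <+: W n := by
  induction n with
  | zero => simp [Nat.le_zero.mp h]
  | succ k ih =>
    rcases Nat.lt_or_ge m (k+1) with h'|h'
    · exact (ih (by omega)).trans (W_prefix k)
    · have : m = k+1 := by omega
      simp [this]

lemma length_W (n : ℕ) : n ≤ (W n).length := by
  induction n using Nat.strong_induction_on with
  | _ n ih =>
    match n with
    | 0 => simp [W]
    | 1 => simp [W]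
    | (k+2) =>
      have h1 := ih (k+1) (by omega)
      have h2 := ih k (by omega)
      simp only [W_rec, List.length_append, List.length_cons, List.length_nil]
      omega

lemma mem_W (n : ℕ) (a : ℕ) (h : a ∈ W n) : a = 1 ∨ a = 2 := by
  induction n using Nat.strong_induction_on with
  | _ n ih =>
    match n with
    | 0 => simp [W] at h
    | 1 => simp [W] at h; omega
    | (k+2) =>
      simp only [W_rec, List.mem_append, List.mem_singleton] at h
      rcases h with (((h|h)|h)|h)|h
      · exact ih (k+1) (by omega) h
      · omega
      · exact ih k (by omega) h
      · omega
      · exact ih (k+1) (by omega) h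

lemma x_eq {m n : ℕ} (h : n < (W m).length) : x n = (W m).getD n 0 := by
  have hx : x n = (W (n+1)).getD n 0 := by simp [x, w]
  rcases Nat.le_total (n+1) m with hm|hm
  · obtain ⟨t, ht⟩ := W_prefix_le hm
    rw [hx, ← ht, getD_app_left]
    exact lt_of_lt_of_le (Nat.lt_succ_self n) (length_W (n+1))
  · obtain ⟨t, ht⟩ := W_prefix_le hm
    rw [hx, ← ht, getD_app_left _ _ _ _ h]

lemma length_W_lt (k : ℕ) : (W (k+1)).length < (W (k+2)).length := by
  have := length_W k
  simp only [W_rec, List.length_append, List.length_cons, List.length_nil]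
  omega

lemma xV {m : ℕ} (hm : 1 ≤ m) {n : ℕ} (h : n < (V m).length) :
    x n = (V m).getD n 0 := by
  obtain ⟨k, rfl⟩ : ∃ k, m = k + 1 := ⟨m - 1, by omega⟩
  rcases Nat.lt_or_ge n (W (k+1)).length with h'|h'
  · rw [x_eq h', V, getD_app_left _ _ _ _ h']
  · have hn : n = (W (k+1)).length := by
      simp only [V, List.length_append, List.length_cons, List.length_nil] at h
      omega
    have h1 : x n = (W (k+2)).getD n 0 := by
      apply x_eq
      have := length_W_lt k
      omega
    rw [h1, hn, W_rec,
      show W (k+1) ++ [2] ++ W k ++ [2] ++ W (k+1)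
        = W (k+1) ++ ([2] ++ (W k ++ [2] ++ W (k+1))) by simp,
      show (W (k+1)).length = (W (k+1)).length + 0 from rfl, getD_app_right,
      V, getD_app_right]
    rfl

lemma V_rec (n : ℕ) : V (n+2) = V (n+1) ++ V n ++ V (n+1) := by
  simp [V, W_rec]

lemma sigma_V (n : ℕ) : (V n).flatMap sb = V (n+1) := by
  induction n using Nat.strong_induction_on with
  | _ n ih =>
    match n with
    | 0 => rfl
    | 1 => rfl
    | (k+2) =>
      rw [V_rec]
      simp only [List.flatMap_append]
      rw [ih (k+1) (by omega), ih k (by omega)]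
      exact (V_rec (k+1)).symm

lemma length_sb (a : ℕ) : (sb a).length = if a = 1 then 3 else 2 := by
  by_cases h : a = 1 <;> simp [sb, h]

lemma take_succ_getD (l : List ℕ) (k : ℕ) (h : k < l.length) :
    l.take (k+1) = l.take k ++ [l.getD k 0] := by
  rw [List.getD_eq_getElem l 0 h, ← List.take_concat_get (l := l) (i := k) h, List.concat_eq_append]

lemma c_take {n : ℕ} (hn : 1 ≤ n) : ∀ {k : ℕ}, k ≤ (V n).length →
    (((V n).take k).flatMap sb).length = c k := by
  intro k
  induction k with
  | zero => simp [c]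
  | succ j ih =>
    intro hk
    have hj : j < (V n).length := by omega
    rw [take_succ_getD _ _ hj, List.flatMap_append, List.length_append,
      ih (by omega)]
    have hx : (V n).getD j 0 = x j := (xV hn hj).symm
    simp only [List.flatMap_cons, List.flatMap_nil, List.append_nil, length_sb, hx]
    rfl

lemma decomp {n k : ℕ} (h : k < (V n).length) :
    V (n+1) = ((V n).take k).flatMap sb
      ++ (sb ((V n).getD k 0) ++ ((V n).drop (k+1)).flatMap sb) := by
  conv_lhs => rw [← sigma_V n, ← List.take_append_drop k (V n)]
  rw [List.flatMap_append, List.drop_eq_getElem_cons h, List.flatMap_cons,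
    List.getD_eq_getElem _ _ h]

lemma block_val (k i : ℕ) (hi : i < (sb (x k)).length) :
    x (c k + i) = (sb (x k)).getD i 0 := by
  set n := k + 1 with hn
  have hn1 : 1 ≤ n := by omega
  have hk : k < (V n).length := by
    have := length_W n
    simp only [V, List.length_append, List.length_cons, List.length_nil]
    omega
  have ha : (V n).getD k 0 = x k := (xV hn1 hk).symm
  have hd := decomp hk
  rw [ha] at hd
  have hT : (((V n).take k).flatMap sb).length = c k := c_take hn1 (le_of_lt hk)
  have hlen : c k + i < (V (n+1)).length := by
    rw [hd]
    simp only [List.length_append, hT]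
    omega
  rw [xV (by omega : 1 ≤ n+1) hlen, hd, ← hT, getD_app_right,
    getD_app_left _ _ _ _ hi]

lemma x_one (k : ℕ) : x (c k) = 1 := by
  have h := block_val k 0 (by by_cases h : x k = 1 <;> simp [sb, h])
  rw [Nat.add_zero] at h
  rw [h]
  by_cases h : x k = 1 <;> simp [sb, h]

lemma x_two (k : ℕ) : x (c k + 1) = 2 := by
  have h := block_val k 1 (by by_cases h : x k = 1 <;> simp [sb, h])
  rw [h]
  by_cases h : x k = 1 <;> simp [sb, h]

lemma x_three (k : ℕ) (hk : x k = 1) : x (c k + 2) = 2 := by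
  have h := block_val k 2 (by simp [sb, hk])
  rw [h]
  simp [sb, hk]

lemma x_mem (n : ℕ) : x n = 1 ∨ x n = 2 := by
  have h : n < (W (n+1)).length := lt_of_lt_of_le (Nat.lt_succ_self n) (length_W (n+1))
  rw [x_eq h, List.getD_eq_getElem _ _ h]
  exact mem_W (n+1) _ (List.getElem_mem h)

lemma c_succ (k : ℕ) : c (k+1) = c k + (if x k = 1 then 3 else 2) := rfl

lemma c_succ_ge (k : ℕ) : c k + 2 ≤ c (k+1) := by
  rw [c_succ]; by_cases h : x k = 1 <;> simp [h]

lemma c_succ_le (k : ℕ) : c (k+1) ≤ c k + 3 := by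
  rw [c_succ]; by_cases h : x k = 1 <;> simp [h]

lemma c_add_ge (a b : ℕ) : c a + 2 * b ≤ c (a + b) := by
  induction b with
  | zero => simp
  | succ j ih =>
    have := c_succ_ge (a + j)
    rw [show a + (j+1) = (a+j)+1 from rfl]
    omega

lemma c_mono {a b : ℕ} (h : a < b) : c a < c b := by
  have := c_add_ge a (b - a)
  have hb : a + (b - a) = b := by omega
  rw [hb] at this
  omega

lemma c_ge (k : ℕ) : 2 * k ≤ c k := by
  induction k with
  | zero => simp
  | succ j ih => have := c_succ_ge j; omega

lemma c_cover (n : ℕ) : ∃ k, c k ≤ n ∧ n < c (k+1) := by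
  induction n with
  | zero => exact ⟨0, by simp [c], by have := c_succ_ge 0; simp [c] at *; omega⟩
  | succ j ih =>
    obtain ⟨k, h1, h2⟩ := ih
    rcases Nat.lt_or_ge (j+1) (c (k+1)) with h|h
    · exact ⟨k, by omega, h⟩
    · refine ⟨k+1, h, ?_⟩
      have := c_succ_ge (k+1)
      omega

lemma ones_eq_c (n : ℕ) (h : x n = 1) : ∃ k, c k = n := by
  obtain ⟨k, h1, h2⟩ := c_cover n
  have h3 := c_succ_le k
  rcases (by omega : n = c k ∨ n = c k + 1 ∨ (n = c k + 2 ∧ c (k+1) = c k + 3)) with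
    rfl | hc | ⟨hc, hc3⟩
  · exact ⟨k, rfl⟩
  · rw [hc, x_two] at h; omega
  · have hxk : x k = 1 := by
      by_contra hk
      rw [c_succ, if_neg hk] at hc3
      omega
    rw [hc, x_three k hxk] at h
    omega

lemma two_iff (k : ℕ) : x k = 2 ↔ x (c k + 2) = 1 := by
  constructor
  · intro h
    have h1 : x k ≠ 1 := by omega
    have : c (k+1) = c k + 2 := by rw [c_succ, if_neg h1]
    rw [← this]
    exact x_one (k+1)
  · intro h
    rcases x_mem k with h1 | h1
    · rw [x_three k h1] at h; omega
    · exact h1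

lemma x_eq_of_iff {a b : ℕ} (h : x a = 2 ↔ x b = 2) : x a = x b := by
  rcases x_mem a with h1|h1 <;> rcases x_mem b with h2|h2 <;> omega

lemma not_ev : ∀ p, 1 ≤ p → ¬ ∃ N, ∀ n, N ≤ n → x (n + p) = x n := by
  intro p
  induction p using Nat.strong_induction_on with
  | _ p ih =>
    intro hp ⟨N, h⟩
    rcases (by omega : p = 1 ∨ 2 ≤ p) with rfl | hp2
    · -- constant tail
      have hconst : ∀ n, N ≤ n → x n = x N := by
        intro n hn
        obtain ⟨j, rfl⟩ := Nat.exists_eq_add_of_le hn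
        induction j with
        | zero => rfl
        | succ i ihj =>
          rw [show N + (i+1) = (N+i) + 1 from rfl, h (N+i) (by omega)]
          exact ihj (by omega)
      have hK : N ≤ c (N+1) := by have := c_ge (N+1); omega
      have h1 := x_one (N+1)
      have h2 := x_two (N+1)
      rw [hconst _ hK] at h1
      rw [hconst _ (by omega)] at h2
      omega
    · -- descent
      set K := N with hKdef
      have hcK : N ≤ c K := by have := c_ge K; omega
      have h1 : x (c K + p) = 1 := by rw [h (c K) hcK, x_one]
      obtain ⟨m, hm⟩ := ones_eq_c _ h1
      have hmK : K < m := by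
        by_contra hh
        push_neg at hh
        have h2 : c m ≤ c K := by
          rcases eq_or_lt_of_le hh with h' | h'
          · exact le_of_eq (by rw [h'])
          · exact le_of_lt (c_mono h')
        omega
      set r := m - K with hr
      have hr1 : 1 ≤ r := by omega
      have hcKr : c (K + r) = c K + p := by rw [show K + r = m by omega, hm]
      have hrp : r < p := by
        have := c_add_ge K r
        omega
      -- step lemma
      have hstep : ∀ a, N ≤ c a → c (a + r) = c a + p → x (a + r) = x a := by
        intro a ha hca
        apply x_eq_of_iff
        rw [two_iff (a+r), two_iff a, hca,
          show c a + p + 2 = (c a + 2) + p by ring, h (c a + 2) (by omega)]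
      have main : ∀ j, c (K + j + r) = c (K + j) + p ∧ x (K + j + r) = x (K + j) := by
        intro j
        induction j with
        | zero =>
          refine ⟨by simpa using hcKr, ?_⟩
          simpa using hstep K hcK hcKr
        | succ i ihj =>
          obtain ⟨hc, hx⟩ := ihj
          have hNi : N ≤ c (K + i) := by
            rcases Nat.eq_zero_or_pos i with rfl|hi
            · simpa using hcK
            · have := c_mono (show K < K + i by omega); omega
          have hc' : c (K + (i+1) + r) = c (K + (i+1)) + p := by
            rw [show K + (i+1) + r = (K + i + r) + 1 by ring,
              show K + (i+1) = (K + i) + 1 from rfl, c_succ, c_succ, hx, hc]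
            ring
          have hNi' : N ≤ c (K + (i+1)) := by
            have := c_mono (show K < K + (i+1) by omega); omega
          exact ⟨hc', hstep (K + (i+1)) hNi' hc'⟩
      have hper : ∀ n, K ≤ n → x (n + r) = x n := by
        intro n hn
        have := (main (n - K)).2
        rwa [show K + (n - K) = n by omega] at this
      exact ih r hrp hr1 ⟨K, hper⟩

def f0 (u : ℕ → ℕ) : ℕ → ℚ := fun n => if n = 0 then 0 else (u n : ℚ)

/-- From a power-series rationality relation, the coefficient sequence is
eventually periodic. -/
theorem ev_periodic_of_rat (u : ℕ → ℕ) (hu : ∀ n, 1 ≤ n → u n = 1 ∨ u n = 2)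
    (P Q : Polynomial ℚ) (hQ : Q ≠ 0)
    (hPS : (PowerSeries.mk (f0 u)) * (Q : PowerSeries ℚ) = (P : PowerSeries ℚ)) :
    ∃ p, 1 ≤ p ∧ ∃ N, ∀ n, N ≤ n → u (n + p) = u n := by
  classical
  set f := f0 u with hf
  set d := Q.natDegree with hd
  set j0 := Q.natTrailingDegree with hj0
  have hj0d : j0 ≤ d := Polynomial.natTrailingDegree_le_natDegree Q
  have hq : Q.coeff j0 ≠ 0 := Polynomial.trailingCoeff_nonzero_iff_nonzero.mpr hQ
  -- the linear recurrence
  have key : ∀ n, d < n → P.natDegree < n →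
      ∑ t ∈ Finset.range (d - j0 + 1), f (n - (j0 + t)) * Q.coeff (j0 + t) = 0 := by
    intro n hdn hPn
    have h1 : (PowerSeries.coeff (R := ℚ) n) ((PowerSeries.mk f) * (Q : PowerSeries ℚ)) = 0 := by
      rw [hPS, Polynomial.coeff_coe, Polynomial.coeff_eq_zero_of_natDegree_lt hPn]
    rw [PowerSeries.coeff_mul,
      Finset.Nat.sum_antidiagonal_eq_sum_range_succ
        (fun i j => (PowerSeries.coeff (R := ℚ) i) (PowerSeries.mk f) * (PowerSeries.coeff (R := ℚ) j) (Q : PowerSeries ℚ))] at h1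
    simp only [PowerSeries.coeff_mk, Polynomial.coeff_coe] at h1
    -- restrict to the window [n-d, n-j0]
    have h2 : ∑ k ∈ Finset.Icc (n - d) (n - j0), f k * Q.coeff (n - k)
        = ∑ k ∈ Finset.range (n + 1), f k * Q.coeff (n - k) := by
      apply Finset.sum_subset
      · intro k hk
        simp only [Finset.mem_Icc] at hk
        simp only [Finset.mem_range]
        omega
      · intro k hk1 hk2
        simp only [Finset.mem_range] at hk1
        simp only [Finset.mem_Icc, not_and_or, not_le] at hk2
        rcases hk2 with hk2 | hk2
        · rw [Polynomial.coeff_eq_zero_of_natDegree_lt (by omega : d < n - k), mul_zero]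
        · rw [Polynomial.coeff_eq_zero_of_lt_natTrailingDegree (by omega : n - k < j0), mul_zero]
    rw [← h2] at h1
    rw [← h1]
    apply Finset.sum_nbij' (i := fun t => n - (j0 + t)) (j := fun k => n - j0 - k)
    · intro t ht
      simp only [Finset.mem_range] at ht
      simp only [Finset.mem_Icc]
      omega
    · intro k hk
      simp only [Finset.mem_Icc] at hk
      simp only [Finset.mem_range]
      omega
    · intro t ht
      simp only [Finset.mem_range] at ht
      omega
    · intro k hk
      simp only [Finset.mem_Icc] at hk
      omega
    · intro t ht
      simp only [Finset.mem_range] at ht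
      congr 1
      congr 1
      omega
  -- peel off the lowest term
  set E := d - j0 + 1 with hE
  have key2 : ∀ n, d < n → P.natDegree < n →
      f (n - j0) * Q.coeff j0
        = - ∑ t ∈ Finset.range (d - j0), f (n - (j0 + (t+1))) * Q.coeff (j0 + (t+1)) := by
    intro n h1 h2
    have h3 := key n h1 h2
    rw [Finset.sum_range_succ' (fun t => f (n - (j0 + t)) * Q.coeff (j0 + t)) (d - j0)] at h3
    simp only [Nat.add_zero] at h3
    linarith [h3]
  set M := P.natDegree + d + 2 with hM
  have window : ∀ a b, M ≤ a → M ≤ b → (∀ t, t < E → f (a + t) = f (b + t)) →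
      f (a + E) = f (b + E) := by
    intro a b ha hb hw
    have hA := key2 (a + E + j0) (by omega) (by omega)
    have hB := key2 (b + E + j0) (by omega) (by omega)
    have hsum : ∀ (a : ℕ), M ≤ a → ∀ t, t < d - j0 →
        a + E + j0 - (j0 + (t+1)) = a + (E - 1 - t) := by intro a ha t ht; omega
    have hAB : (∑ t ∈ Finset.range (d - j0), f (a + E + j0 - (j0 + (t+1))) * Q.coeff (j0 + (t+1)))
        = ∑ t ∈ Finset.range (d - j0), f (b + E + j0 - (j0 + (t+1))) * Q.coeff (j0 + (t+1)) := by
      apply Finset.sum_congr rfl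
      intro t ht
      simp only [Finset.mem_range] at ht
      rw [hsum a ha t ht, hsum b hb t ht, hw (E - 1 - t) (by omega)]
    have hcancel : f (a + E + j0 - j0) * Q.coeff j0 = f (b + E + j0 - j0) * Q.coeff j0 := by
      rw [hA, hB, hAB]
    rw [show a + E + j0 - j0 = a + E by omega, show b + E + j0 - j0 = b + E by omega] at hcancel
    exact mul_right_cancel₀ hq hcancel
  -- pigeonhole on windows of length E
  have hME : 1 ≤ M := by omega
  set g : ℕ → (Fin E → Fin 4) := fun k i => ⟨min (u (M + k + i)) 3, by omega⟩ with hg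
  obtain ⟨k1, k2, hne, heq⟩ := Finite.exists_ne_map_eq_of_infinite g
  -- wlog k1 < k2
  wlog hlt : k1 < k2 generalizing k1 k2
  · exact this k2 k1 hne.symm heq.symm (by omega)
  set p := k2 - k1 with hp
  have hp1 : 1 ≤ p := by omega
  set a := M + k1 with ha
  have hwin0 : ∀ t, t < E → f (a + t) = f (a + p + t) := by
    intro t ht
    have := congrFun heq ⟨t, ht⟩
    simp only [hg, Fin.mk.injEq] at this
    have h1 := hu (M + k1 + t) (by omega)
    have h2 := hu (M + k2 + t) (by omega)
    have huu : u (M + k1 + t) = u (M + k2 + t) := by omega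
    have e1 : a + t ≠ 0 := by omega
    have e2 : a + p + t ≠ 0 := by omega
    simp only [hf, f0, if_neg e1, if_neg e2]
    rw [show a + p + t = M + k2 + t by omega, show a + t = M + k1 + t by omega, huu]
  have slide : ∀ j t, t < E → f (a + j + t) = f (a + p + j + t) := by
    intro j
    induction j with
    | zero => simpa using hwin0
    | succ i ihj =>
      intro t ht
      rcases Nat.lt_or_ge (t+1) E with h'|h'
      · have := ihj (t+1) h'
        rw [show a + (i+1) + t = a + i + (t+1) by ring, show a + p + (i+1) + t = a + p + i + (t+1) by ring]
        exact this
      · have htE : t = E - 1 := by omega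
        have := window (a + i) (a + p + i) (by omega) (by omega) ihj
        rw [show a + (i+1) + t = a + i + E by omega, show a + p + (i+1) + t = a + p + i + E by omega]
        exact this
  refine ⟨p, hp1, a, ?_⟩
  intro n hn
  have := slide (n - a) 0 (by omega)
  rw [show a + (n - a) + 0 = n by omega, show a + p + (n - a) + 0 = n + p by omega] at this
  have e1 : n ≠ 0 := by omega
  have e2 : n + p ≠ 0 := by omega
  simp only [hf, f0, if_neg e1, if_neg e2] at this
  exact_mod_cast this.symm


lemma w_val (n : ℕ) (hn : 1 ≤ n) : w n = 1 ∨ w n = 2 := by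
  have : w n = x (n - 1) := by
    simp only [x]
    congr 1
    omega
  rw [this]
  exact x_mem (n - 1)

/-- `θ` is irrational: there are no polynomials `P, Q ∈ ℚ[X]` with `Q ≠ 0`
and `θ · Q(X) = P(X)` in `ℚ((X))`. -/
theorem theta_irrational :
    ¬ ∃ P Q : Polynomial ℚ, Q ≠ 0 ∧
      theta * ((Q : PowerSeries ℚ) : LaurentSeries ℚ)
        = ((P : PowerSeries ℚ) : LaurentSeries ℚ) := by
  rintro ⟨P, Q, hQ, h⟩
  have hPS : (PowerSeries.mk (f0 w)) * (Q : PowerSeries ℚ) = (P : PowerSeries ℚ) := by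
    apply HahnSeries.ofPowerSeries_injective (Γ := ℤ)
    rw [map_mul]
    exact h
  obtain ⟨p, hp1, N, hN⟩ := ev_periodic_of_rat w w_val P Q hQ hPS
  apply not_ev p hp1
  refine ⟨N, fun n hn => ?_⟩
  simp only [x]
  rw [show n + p + 1 = (n + 1) + p by ring]
  exact hN (n + 1) (by omega)
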